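/- Let ã, b̃, c̃, d̃ > 0 and p̃, q̃ ∈ (4, ∞). Then the function f(t) = ã t² + b̃ t⁴ − c̃ t^{p̃} − d̃ t^{q̃} on [0, ∞) has a unique global maximum point t̄ > 0, its maximum value f(t̄) is positive, and f is strictly increasing on [0, t̄] and strictly decreasing on [t̄, ∞). -/

import Mathlib

open Real

/-- for `ã, b̃, c̃, d̃ > 0` and `p̃, q̃ ∈ (4,∞)`, the function
`f(t) = ã t² + b̃ t⁴ − c̃ t^p̃ − d̃ t^q̃` has a unique global maximum point `t̄ > 0` on
`[0,∞)`, with `f(t̄) > 0`; `f` is strictly increasing on `[0,t̄]` and strictly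
decreasing on `[t̄,∞)`. -/
theorem stmt_3 (a b c d p q : ℝ) (ha : 0 < a) (hb : 0 < b) (hc : 0 < c) (hd : 0 < d)
    (hp : 4 < p) (hq : 4 < q)
    (f : ℝ → ℝ) (hf : ∀ t, f t = a * t ^ 2 + b * t ^ 4 - c * t ^ p - d * t ^ q) :
    ∃ tbar : ℝ, 0 < tbar ∧ 0 < f tbar ∧
      StrictMonoOn f (Set.Icc 0 tbar) ∧
      StrictAntiOn f (Set.Ici tbar) ∧
      (∀ t, 0 ≤ t → t ≠ tbar → f t < f tbar) := by
  have hfe : f = fun t => a * t ^ 2 + b * t ^ 4 - c * t ^ p - d * t ^ q := funext hf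
  subst hfe
  set k : ℝ → ℝ := fun t => 2*a/t^2 + 4*b - c*p*t^(p-4) - d*q*t^(q-4) with hk
  -- derivative of f
  have hder : ∀ t : ℝ, HasDerivAt (fun t => a * t ^ 2 + b * t ^ 4 - c * t ^ p - d * t ^ q)
      (2*a*t + 4*b*t^3 - c*(p*t^(p-1)) - d*(q*t^(q-1))) t := by
    intro t
    have h1 : HasDerivAt (fun t : ℝ => a * t^2) (a * (↑2*t^1)) t :=
      (hasDerivAt_pow 2 t).const_mul a
    have h2 : HasDerivAt (fun t : ℝ => b * t^4) (b * (↑4*t^3)) t :=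
      (hasDerivAt_pow 4 t).const_mul b
    have h3 : HasDerivAt (fun t : ℝ => c * t^p) (c * (p*t^(p-1))) t :=
      (Real.hasDerivAt_rpow_const (Or.inr (by linarith))).const_mul c
    have h4 : HasDerivAt (fun t : ℝ => d * t^q) (d * (q*t^(q-1))) t :=
      (Real.hasDerivAt_rpow_const (Or.inr (by linarith))).const_mul d
    have := ((h1.add h2).sub h3).sub h4
    refine this.congr_deriv ?_
    push_cast; ring
  have hcontf : Continuous (fun t : ℝ => a * t ^ 2 + b * t ^ 4 - c * t ^ p - d * t ^ q) := by
    have : Differentiable ℝ (fun t : ℝ => a * t ^ 2 + b * t ^ 4 - c * t ^ p - d * t ^ q) :=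
      fun t => (hder t).differentiableAt
    exact this.continuous
  have hderiv_eq : ∀ t : ℝ, deriv (fun t => a * t ^ 2 + b * t ^ 4 - c * t ^ p - d * t ^ q) t
      = 2*a*t + 4*b*t^3 - c*(p*t^(p-1)) - d*(q*t^(q-1)) := fun t => (hder t).deriv
  -- f' t = t^3 * k t for t > 0
  have hrel : ∀ t : ℝ, 0 < t →
      2*a*t + 4*b*t^3 - c*(p*t^(p-1)) - d*(q*t^(q-1)) = t^3 * k t := by
    intro t ht
    have e1 : (t:ℝ)^(3:ℕ) * t^(p-4) = t^(p-1) := by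
      rw [← Real.rpow_natCast t 3, ← Real.rpow_add ht]; ring_nf
    have e2 : (t:ℝ)^(3:ℕ) * t^(q-4) = t^(q-1) := by
      rw [← Real.rpow_natCast t 3, ← Real.rpow_add ht]; ring_nf
    have e3 : (t:ℝ)^(3:ℕ) / t^(2:ℕ) = t := by
      rw [pow_succ]; field_simp
    simp only [hk]
    linear_combination -2*a*e3 + c*p*e1 + d*q*e2
  -- k strictly decreasing on (0,∞)
  have hkanti : StrictAntiOn k (Set.Ioi 0) := by
    intro x hx y hy hxy
    simp only [Set.mem_Ioi] at hx hy
    have h1 : 2*a/y^2 < 2*a/x^2 :=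
      div_lt_div_of_pos_left (by linarith) (pow_pos hx 2) (by nlinarith)
    have h2 : c*p*x^(p-4) < c*p*y^(p-4) :=
      mul_lt_mul_of_pos_left (Real.rpow_lt_rpow hx.le hxy (by linarith)) (by positivity)
    have h3 : d*q*x^(q-4) < d*q*y^(q-4) :=
      mul_lt_mul_of_pos_left (Real.rpow_lt_rpow hx.le hxy (by linarith)) (by positivity)
    simp only [hk]
    linarith
  -- k continuous away from 0
  have hkcont : ∀ x : ℝ, 0 < x → ContinuousAt k x := by
    intro x hx
    have h1 : ContinuousAt (fun t : ℝ => t ^ (p-4)) x :=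
      Real.continuousAt_rpow_const x _ (Or.inl hx.ne')
    have h2 : ContinuousAt (fun t : ℝ => t ^ (q-4)) x :=
      Real.continuousAt_rpow_const x _ (Or.inl hx.ne')
    have h0 : ContinuousAt (fun t : ℝ => 2*a/t^2) x :=
      continuousAt_const.div (by fun_prop) (pow_ne_zero 2 hx.ne')
    exact ((h0.add continuousAt_const).sub ((continuousAt_const.mul h1))).sub
      (continuousAt_const.mul h2)
  -- small point where k > 0
  obtain ⟨ε, hε0, hε1, hkε⟩ : ∃ ε : ℝ, 0 < ε ∧ ε ≤ 1 ∧ 0 < k ε := by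
    have hcp : 0 < c*p + d*q := by positivity
    refine ⟨min 1 (Real.sqrt (a/(c*p+d*q))), by positivity, min_le_left _ _, ?_⟩
    set ε := min 1 (Real.sqrt (a/(c*p+d*q))) with hε
    have hε0 : 0 < ε := by positivity
    have hεle : ε ≤ 1 := min_le_left _ _
    have hsq : ε^2 ≤ a/(c*p+d*q) := by
      have h1 : ε ≤ Real.sqrt (a/(c*p+d*q)) := min_le_right _ _
      have := Real.sq_sqrt (le_of_lt (by positivity : (0:ℝ) < a/(c*p+d*q)))
      nlinarith [Real.sqrt_nonneg (a/(c*p+d*q))]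
    have hA : c*p + d*q ≤ a / ε^2 := by
      rw [le_div_iff₀ (by positivity)]
      calc (c*p+d*q) * ε^2 ≤ (c*p+d*q) * (a/(c*p+d*q)) := by
            exact mul_le_mul_of_nonneg_left hsq hcp.le
        _ = a := by field_simp
    have hp4 : ε ^ (p-4) ≤ 1 := Real.rpow_le_one hε0.le hεle (by linarith)
    have hq4 : ε ^ (q-4) ≤ 1 := Real.rpow_le_one hε0.le hεle (by linarith)
    have hcpε : c*p*ε^(p-4) ≤ c*p := by
      calc c*p*ε^(p-4) ≤ c*p*1 := mul_le_mul_of_nonneg_left hp4 (by positivity)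
        _ = c*p := mul_one _
    have hdqε : d*q*ε^(q-4) ≤ d*q := by
      calc d*q*ε^(q-4) ≤ d*q*1 := mul_le_mul_of_nonneg_left hq4 (by positivity)
        _ = d*q := mul_one _
    simp only [hk]
    have : 2*a/ε^2 = 2*(a/ε^2) := by ring
    rw [this]
    have hcp0 : 0 < c*p := by positivity
    have hdq0 : 0 < d*q := by positivity
    nlinarith [div_pos ha (pow_pos hε0 2)]
  -- large point where k < 0
  obtain ⟨M, hM1, hkM⟩ : ∃ M : ℝ, 1 ≤ M ∧ k M < 0 := by
    set K : ℝ := (2*a+4*b)/(c*p) + 1 with hK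
    have hK1 : 1 ≤ K ∨ 0 < K := Or.inr (by positivity)
    have hK0 : 0 < K := by positivity
    refine ⟨max 1 (K ^ (1/(p-4))), le_max_left _ _, ?_⟩
    set M := max 1 (K ^ (1/(p-4))) with hM
    have hM0 : (1:ℝ) ≤ M := le_max_left _ _
    have hMr : K ≤ M ^ (p-4) := by
      have h1 : K ^ (1/(p-4)) ≤ M := le_max_right _ _
      have h2 : (K ^ (1/(p-4))) ^ (p-4) ≤ M ^ (p-4) :=
        Real.rpow_le_rpow (by positivity) h1 (by linarith)
      rwa [← Real.rpow_mul hK0.le, one_div, inv_mul_cancel₀ (by linarith : p - 4 ≠ 0),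
        Real.rpow_one] at h2
    have hcpM : 2*a + 4*b + c*p ≤ c*p*M^(p-4) := by
      have h1 : c*p*K = 2*a+4*b + c*p := by rw [hK]; field_simp
      have h2 : c*p*K ≤ c*p*M^(p-4) := mul_le_mul_of_nonneg_left hMr (by positivity)
      linarith
    have hdqM : 0 < d*q*M^(q-4) := by
      have : (0:ℝ) < M ^ (q-4) := Real.rpow_pos_of_pos (by linarith) _
      positivity
    have haM : 2*a/M^2 ≤ 2*a := by
      rw [div_le_iff₀ (by positivity)]
      nlinarith [mul_nonneg ha.le (sq_nonneg (M-1)), mul_nonneg ha.le (sub_nonneg.mpr hM0)]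
    simp only [hk]
    have hcp0 : 0 < c*p := by positivity
    linarith
  have hεM : ε ≤ M := le_trans hε1 hM1
  -- find the zero of k via IVT (k is decreasing: use intermediate_value_Icc')
  obtain ⟨tbar, htmem, htk⟩ : ∃ tbar ∈ Set.Icc ε M, k tbar = 0 := by
    have hc : ContinuousOn k (Set.Icc ε M) := fun x hx =>
      (hkcont x (lt_of_lt_of_le hε0 hx.1)).continuousWithinAt
    have := intermediate_value_Icc' hεM hc
    have h0 : (0:ℝ) ∈ Set.Icc (k M) (k ε) := ⟨hkM.le, hkε.le⟩
    obtain ⟨t, ht, hkt⟩ := this h0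
    exact ⟨t, ht, hkt⟩
  have htbar0 : 0 < tbar := lt_of_lt_of_le hε0 htmem.1
  -- sign of k
  have hkpos : ∀ t : ℝ, 0 < t → t < tbar → 0 < k t := by
    intro t ht htt
    have := hkanti (Set.mem_Ioi.mpr ht) (Set.mem_Ioi.mpr htbar0) htt
    linarith [htk ▸ this]
  have hkneg : ∀ t : ℝ, tbar < t → k t < 0 := by
    intro t htt
    have := hkanti (Set.mem_Ioi.mpr htbar0) (Set.mem_Ioi.mpr (lt_trans htbar0 htt)) htt
    linarith [htk ▸ this]
  -- strict monotonicity on [0, tbar]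
  have hmono : StrictMonoOn (fun t => a * t ^ 2 + b * t ^ 4 - c * t ^ p - d * t ^ q)
      (Set.Icc 0 tbar) := by
    apply strictMonoOn_of_deriv_pos (convex_Icc 0 tbar) (hcontf.continuousOn)
    intro x hx
    rw [interior_Icc] at hx
    rw [hderiv_eq, hrel x hx.1]
    exact mul_pos (pow_pos hx.1 3) (hkpos x hx.1 hx.2)
  -- strict antitonicity on [tbar, ∞)
  have hanti : StrictAntiOn (fun t => a * t ^ 2 + b * t ^ 4 - c * t ^ p - d * t ^ q)
      (Set.Ici tbar) := by
    apply strictAntiOn_of_deriv_neg (convex_Ici tbar) (hcontf.continuousOn)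
    intro x hx
    rw [interior_Ici] at hx
    rw [hderiv_eq, hrel x (lt_trans htbar0 hx)]
    exact mul_neg_of_pos_of_neg (pow_pos (lt_trans htbar0 hx) 3) (hkneg x hx)
  -- f 0 = 0
  have hf0 : (fun t => a * t ^ 2 + b * t ^ 4 - c * t ^ p - d * t ^ q) 0 = 0 := by
    simp [Real.zero_rpow (by linarith : p ≠ 0), Real.zero_rpow (by linarith : q ≠ 0)]
  have hfpos : 0 < (fun t => a * t ^ 2 + b * t ^ 4 - c * t ^ p - d * t ^ q) tbar := by
    have := hmono (Set.mem_Icc.mpr ⟨le_refl 0, htbar0.le⟩)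
      (Set.mem_Icc.mpr ⟨htbar0.le, le_refl tbar⟩) htbar0
    rw [hf0] at this
    exact this
  refine ⟨tbar, htbar0, hfpos, hmono, hanti, ?_⟩
  intro t ht htne
  rcases lt_or_gt_of_ne htne with h | h
  · exact hmono (Set.mem_Icc.mpr ⟨ht, h.le⟩) (Set.mem_Icc.mpr ⟨htbar0.le, le_refl _⟩) h
  · exact hanti (Set.mem_Ici.mpr (le_refl _)) (Set.mem_Ici.mpr h.le) h
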